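/- Let G = P_s □ P_t be a grid graph with s ≥ t ≥ 2 and s ≥ 3, and let k be an integer with s < k ≤ s + t − 2; write k = s + α with α ≥ 1. Then the set S = (U × {v_1, v_t}) ∪ ({u_1, u_s} × {v_2, ..., v_{α+1}}), where U = {u_1, ..., u_s}, has size 2k and is a k-resolving set for G. -/

import Mathlib

open SimpleGraph Finset

section infra

lemma pathGraph_walk_le {n : ℕ} {i j : Fin n} (p : (pathGraph n).Walk i j) :
    ((i : ℤ) - (j : ℤ)).natAbs ≤ p.length := by
  induction p with
  | nil => simp
  | @cons u v w h p ih =>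
    rw [pathGraph_adj] at h
    simp only [SimpleGraph.Walk.length_cons]
    omega

lemma pathGraph_connected' {n : ℕ} (h : 0 < n) : (pathGraph n).Connected := by
  obtain ⟨m, rfl⟩ := Nat.exists_eq_succ_of_ne_zero h.ne'
  exact pathGraph_connected m

lemma pathGraph_dist_le {n : ℕ} (d : ℕ) : ∀ i j : Fin n, (j : ℕ) = (i : ℕ) + d →
    (pathGraph n).dist i j ≤ d := by
  induction d with
  | zero =>
    intro i j hij
    have : i = j := Fin.ext (by omega)
    subst this
    simp [SimpleGraph.dist_self]
  | succ d ih =>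
    intro i j hij
    have hm : (i : ℕ) + d < n := by omega
    set m : Fin n := ⟨(i : ℕ) + d, hm⟩ with hmdef
    have hadj : (pathGraph n).Adj m j := by
      rw [pathGraph_adj]; left; simp [hmdef]; omega
    have h1 : (pathGraph n).dist m j ≤ 1 := by
      have := SimpleGraph.dist_le (hadj.toWalk)
      simpa using this
    have h2 : (pathGraph n).dist i m ≤ d := ih i m (by simp [hmdef])
    have := (pathGraph_connected' (n := n) i.pos).dist_triangle (u := i) (v := m) (w := j)
    omega

lemma pathGraph_dist {n : ℕ} (i j : Fin n) :
    (pathGraph n).dist i j = ((i : ℤ) - (j : ℤ)).natAbs := by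
  refine le_antisymm ?_ ?_
  · rcases le_total (i : ℕ) (j : ℕ) with hle | hle
    · have := pathGraph_dist_le ((j : ℕ) - (i : ℕ)) i j (by omega)
      omega
    · have := pathGraph_dist_le ((i : ℕ) - (j : ℕ)) j i (by omega)
      rw [SimpleGraph.dist_comm] at this
      omega
  · obtain ⟨p, hp⟩ := (pathGraph_connected' (n := n) i.pos).exists_walk_length_eq_dist i j
    have := pathGraph_walk_le p
    omega

lemma boxProd_walk_le {α β : Type*} {G : SimpleGraph α} {H : SimpleGraph β}
    (hG : G.Connected) (hH : H.Connected) {x y : α × β} (p : (G □ H).Walk x y) :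
    G.dist x.1 y.1 + H.dist x.2 y.2 ≤ p.length := by
  induction p with
  | nil => simp [SimpleGraph.dist_self]
  | @cons u v w h p ih =>
    rw [boxProd_adj] at h
    simp only [SimpleGraph.Walk.length_cons]
    rcases h with ⟨ha, he⟩ | ⟨ha, he⟩
    · have h1 : G.dist u.1 v.1 ≤ 1 := by simpa using SimpleGraph.dist_le ha.toWalk
      have := hG.dist_triangle (u := u.1) (v := v.1) (w := w.1)
      rw [he]
      omega
    · have h1 : H.dist u.2 v.2 ≤ 1 := by simpa using SimpleGraph.dist_le ha.toWalk
      have := hH.dist_triangle (u := u.2) (v := v.2) (w := w.2)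
      rw [he]
      omega

lemma boxProd_dist {α β : Type*} {G : SimpleGraph α} {H : SimpleGraph β}
    (hG : G.Connected) (hH : H.Connected) (x y : α × β) :
    (G □ H).dist x y = G.dist x.1 y.1 + H.dist x.2 y.2 := by
  refine le_antisymm ?_ ?_
  · obtain ⟨p, hp⟩ := hG.exists_walk_length_eq_dist x.1 y.1
    obtain ⟨q, hq⟩ := hH.exists_walk_length_eq_dist x.2 y.2
    have hle := SimpleGraph.dist_le ((p.boxProdLeft H x.2).append (q.boxProdRight G y.1))
    have hlen : ((p.boxProdLeft H x.2).append (q.boxProdRight G y.1)).length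
        = p.length + q.length := by
      rw [SimpleGraph.Walk.length_append]
      simp [SimpleGraph.Walk.length_map, SimpleGraph.Walk.length_append, SimpleGraph.Walk.boxProdLeft,
        SimpleGraph.Walk.boxProdRight]
      exact congrArg₂ (· + ·) (SimpleGraph.Walk.length_map _ _) (SimpleGraph.Walk.length_map _ _)
    simp only [Prod.mk.eta] at hle
    omega
  · obtain ⟨p, hp⟩ := (hG.boxProd hH).exists_walk_length_eq_dist x y
    have := boxProd_walk_le hG hH p
    omega

lemma grid_dist {s t : ℕ} (hs : 0 < s) (ht : 0 < t) (u v : Fin s × Fin t) :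
    ((pathGraph s).boxProd (pathGraph t)).dist u v =
      ((u.1 : ℤ) - (v.1 : ℤ)).natAbs + ((u.2 : ℤ) - (v.2 : ℤ)).natAbs := by
  rw [boxProd_dist (pathGraph_connected' hs) (pathGraph_connected' ht),
    pathGraph_dist, pathGraph_dist]
end infra

/-- A finset `S` of vertices is a `k`-resolving set for `G`: any two distinct vertices `u, w`
have different distances to at least `k` vertices of `S`. -/
def IsKResolvingSet {V : Type*} [DecidableEq V] (G : SimpleGraph V) (k : ℕ) (S : Finset V) : Prop :=
  ∀ u w : V, u ≠ w → k ≤ (S.filter (fun v => G.dist u v ≠ G.dist w v)).card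

lemma main_aux (s t k α : ℕ) (ht : 2 ≤ t) (hts : t ≤ s) (hs : 3 ≤ s) (hα : 1 ≤ α)
    (hk : k = s + α) (hαt : α ≤ t - 2)
    (j0 j1 : Fin t) (i0 i1 : Fin s) (hj0 : (j0 : ℕ) = 0) (hj1 : (j1 : ℕ) = t - 1)
    (hi0 : (i0 : ℕ) = 0) (hi1 : (i1 : ℕ) = s - 1) :
    ((Finset.univ ×ˢ ({j0, j1} : Finset (Fin t))) ∪
        (({i0, i1} : Finset (Fin s)) ×ˢ
          (Finset.univ.filter (fun j : Fin t => 1 ≤ (j : ℕ) ∧ (j : ℕ) ≤ α)))).card = 2 * k ∧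
      IsKResolvingSet ((SimpleGraph.pathGraph s).boxProd (SimpleGraph.pathGraph t)) k
        ((Finset.univ ×ˢ ({j0, j1} : Finset (Fin t))) ∪
          (({i0, i1} : Finset (Fin s)) ×ˢ
            (Finset.univ.filter (fun j : Fin t => 1 ≤ (j : ℕ) ∧ (j : ℕ) ≤ α)))) := by
  have ht3 : 3 ≤ t := by omega
  set G := (SimpleGraph.pathGraph s).boxProd (SimpleGraph.pathGraph t) with hGdef
  have key : ∀ u v : Fin s × Fin t, G.dist u v =
      ((u.1 : ℤ) - (v.1 : ℤ)).natAbs + ((u.2 : ℤ) - (v.2 : ℤ)).natAbs :=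
    grid_dist (by omega) (by omega)
  set J : Finset (Fin t) := Finset.univ.filter (fun j : Fin t => 1 ≤ (j : ℕ) ∧ (j : ℕ) ≤ α)
    with hJdef
  set A : Finset (Fin s × Fin t) := Finset.univ ×ˢ ({j0, j1} : Finset (Fin t)) with hAdef
  set B : Finset (Fin s × Fin t) := ({i0, i1} : Finset (Fin s)) ×ˢ J with hBdef
  have hJmem : ∀ j : Fin t, j ∈ J ↔ 1 ≤ (j : ℕ) ∧ (j : ℕ) ≤ α := by
    intro j; simp [hJdef]
  have hAmem : ∀ v : Fin s × Fin t, v ∈ A ↔ (v.2 = j0 ∨ v.2 = j1) := by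
    intro v; simp [hAdef, Finset.mem_product]
  have hBmem : ∀ v : Fin s × Fin t,
      v ∈ B ↔ (v.1 = i0 ∨ v.1 = i1) ∧ (1 ≤ (v.2 : ℕ) ∧ (v.2 : ℕ) ≤ α) := by
    intro v; simp [hBdef, Finset.mem_product, hJmem]
  have hJcard : J.card = α := by
    have : J = Finset.Icc (⟨1, by omega⟩ : Fin t) ⟨α, by omega⟩ := by
      ext j
      simp [hJdef, Finset.mem_Icc, Fin.le_def]
    rw [this, Fin.card_Icc]
    show α + 1 - 1 = α
    omega
  have hj01 : j0 ≠ j1 := by intro h; rw [h] at hj0; omega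
  have hi01 : i0 ≠ i1 := by intro h; rw [h] at hi0; omega
  have hAcard : A.card = 2 * s := by
    rw [hAdef, Finset.card_product, Finset.card_univ, Fintype.card_fin,
      Finset.card_pair hj01]
    ring
  have hBcard : B.card = 2 * α := by
    rw [hBdef, Finset.card_product, Finset.card_pair hi01, hJcard]
  have hdisj : Disjoint A B := by
    rw [Finset.disjoint_left]
    intro v hvA hvB
    rw [hAmem] at hvA
    rw [hBmem] at hvB
    rcases hvA with h | h <;> rw [h] at hvB <;> omega
  constructor
  · rw [Finset.card_union_of_disjoint hdisj, hAcard, hBcard]; omega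
  · intro u w huw
    have hu1 := u.1.isLt
    have hu2 := u.2.isLt
    have hw1 := w.1.isLt
    have hw2 := w.2.isLt
    have hsplit : ((A ∪ B).filter (fun v => G.dist u v ≠ G.dist w v)).card =
        (A.filter (fun v => G.dist u v ≠ G.dist w v)).card +
          (B.filter (fun v => G.dist u v ≠ G.dist w v)).card := by
      rw [Finset.filter_union]
      exact Finset.card_union_of_disjoint
        (hdisj.mono (Finset.filter_subset _ _) (Finset.filter_subset _ _))
    have hleA : (A.filter (fun v => G.dist u v ≠ G.dist w v)).card ≤
        ((A ∪ B).filter (fun v => G.dist u v ≠ G.dist w v)).card :=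
      Finset.card_le_card (Finset.filter_subset_filter _ Finset.subset_union_left)
    by_cases hbd : u.2 = w.2
    · -- second coordinates equal, first differ
      have hac : u.1 ≠ w.1 := fun h => huw (Prod.ext h hbd)
      have hacv : (u.1 : ℕ) ≠ (w.1 : ℕ) := fun h => hac (Fin.ext h)
      have hbdv : (u.2 : ℕ) = (w.2 : ℕ) := by rw [hbd]
      set m : Fin s := ⟨((u.1 : ℕ) + (w.1 : ℕ)) / 2, by omega⟩ with hmdef
      have hbad : A.filter (fun v => ¬ (G.dist u v ≠ G.dist w v)) ⊆ {(m, j0), (m, j1)} := by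
        intro v hv
        rw [Finset.mem_filter] at hv
        obtain ⟨hvA, hnp⟩ := hv
        rw [hAmem] at hvA
        simp only [ne_eq, not_not] at hnp
        rw [key, key] at hnp
        have hv1 : v.1 = m := by
          apply Fin.ext
          show (v.1 : ℕ) = ((u.1 : ℕ) + (w.1 : ℕ)) / 2
          omega
        rw [Finset.mem_insert, Finset.mem_singleton]
        rcases hvA with h | h
        · left; rw [← hv1, ← h]
        · right; rw [← hv1, ← h]
      have hbadcard : (A.filter (fun v => ¬ (G.dist u v ≠ G.dist w v))).card ≤ 2 := by
        calc (A.filter (fun v => ¬ (G.dist u v ≠ G.dist w v))).card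
            ≤ ({(m, j0), (m, j1)} : Finset _).card := Finset.card_le_card hbad
          _ ≤ 2 := (Finset.card_insert_le _ _).trans (by simp)
      have hparts := Finset.card_filter_add_card_filter_not (s := A)
        (p := fun v => G.dist u v ≠ G.dist w v)
      omega
    · have hbdv : (u.2 : ℕ) ≠ (w.2 : ℕ) := fun h => hbd (Fin.ext h)
      by_cases hac : u.1 = w.1
      · -- first coordinates equal: all of A resolves
        have hacv : (u.1 : ℕ) = (w.1 : ℕ) := by rw [hac]
        have hall : A ⊆ A.filter (fun v => G.dist u v ≠ G.dist w v) := by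
          intro v hv
          rw [Finset.mem_filter]
          refine ⟨hv, ?_⟩
          rw [hAmem] at hv
          rw [key, key]
          have hv2 := v.2.isLt
          rcases hv with h | h <;> rw [h] <;> omega
        have hAcount : 2 * s ≤ (A.filter (fun v => G.dist u v ≠ G.dist w v)).card := by
          rw [← hAcard]; exact Finset.card_le_card hall
        omega
      · -- both coordinates differ
        have hacv : (u.1 : ℕ) ≠ (w.1 : ℕ) := fun h => hac (Fin.ext h)
        have hrow : ∀ i : Fin s,
            G.dist u (i, j0) ≠ G.dist w (i, j0) ∨ G.dist u (i, j1) ≠ G.dist w (i, j1) := by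
          intro i
          by_contra hcon
          push_neg at hcon
          obtain ⟨h1, h2⟩ := hcon
          rw [key, key] at h1
          rw [key, key] at h2
          dsimp only at h1 h2
          omega
        have hcol : ∀ j : Fin t, 1 ≤ (j : ℕ) → (j : ℕ) ≤ α →
            G.dist u (i0, j) ≠ G.dist w (i0, j) ∨ G.dist u (i1, j) ≠ G.dist w (i1, j) := by
          intro j hja hjb
          by_contra hcon
          push_neg at hcon
          obtain ⟨h1, h2⟩ := hcon
          rw [key, key] at h1
          rw [key, key] at h2
          dsimp only at h1 h2
          omega
        have hAcount : s ≤ (A.filter (fun v => G.dist u v ≠ G.dist w v)).card := by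
          have hcle := Finset.card_le_card_of_injOn
            (f := fun i : Fin s => if G.dist u (i, j0) ≠ G.dist w (i, j0)
              then ((i, j0) : Fin s × Fin t) else (i, j1))
            (s := Finset.univ) (t := A.filter (fun v => G.dist u v ≠ G.dist w v))
            (fun i _ => by
              show (if G.dist u (i, j0) ≠ G.dist w (i, j0)
                  then ((i, j0) : Fin s × Fin t) else (i, j1)) ∈ _
              by_cases h : G.dist u (i, j0) ≠ G.dist w (i, j0)
              · rw [if_pos h, Finset.mem_coe, Finset.mem_filter, hAmem]; exact ⟨Or.inl rfl, h⟩
              · rw [if_neg h, Finset.mem_coe, Finset.mem_filter, hAmem]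
                exact ⟨Or.inr rfl, (hrow i).resolve_left h⟩)
            (by
              intro x _ y _ hxy
              have hfst : ∀ i : Fin s,
                  ((if G.dist u (i, j0) ≠ G.dist w (i, j0)
                    then ((i, j0) : Fin s × Fin t) else (i, j1)).1) = i := by
                intro i; split <;> rfl
              have h2 := congrArg Prod.fst hxy
              dsimp only at h2
              rwa [hfst, hfst] at h2)
          simpa using hcle
        have hBcount : α ≤ (B.filter (fun v => G.dist u v ≠ G.dist w v)).card := by
          rw [← hJcard]
          apply Finset.card_le_card_of_injOn
            (f := fun j : Fin t => if G.dist u (i0, j) ≠ G.dist w (i0, j)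
              then ((i0, j) : Fin s × Fin t) else (i1, j))
          · intro j hj
            rw [Finset.mem_coe, hJmem] at hj
            show (if G.dist u (i0, j) ≠ G.dist w (i0, j)
                then ((i0, j) : Fin s × Fin t) else (i1, j)) ∈ _
            by_cases h : G.dist u (i0, j) ≠ G.dist w (i0, j)
            · rw [if_pos h, Finset.mem_coe, Finset.mem_filter, hBmem]; exact ⟨⟨Or.inl rfl, hj⟩, h⟩
            · rw [if_neg h, Finset.mem_coe, Finset.mem_filter, hBmem]
              exact ⟨⟨Or.inr rfl, hj⟩, (hcol j hj.1 hj.2).resolve_left h⟩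
          · intro x _ y _ hxy
            have hsnd : ∀ j : Fin t,
                ((if G.dist u (i0, j) ≠ G.dist w (i0, j)
                  then ((i0, j) : Fin s × Fin t) else (i1, j)).2) = j := by
              intro j; split <;> rfl
            have h2 := congrArg Prod.snd hxy
            dsimp only at h2
            rwa [hsnd, hsnd] at h2
        omega

/-- In the grid graph `P_s □ P_t` with `s ≥ t ≥ 2` and `s ≥ 3`, for `k = s + α` with `α ≥ 1`
and `k ≤ s + t - 2`, the set `S = (U × {v₁, v_t}) ∪ ({u₁, u_s} × {v₂, …, v_{α+1}})` has
size `2k` and is a `k`-resolving set. -/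
theorem grid_kResolvingSet_case_k_gt_s (s t : ℕ) (ht : 2 ≤ t) (hts : t ≤ s) (hs : 3 ≤ s)
    (k α : ℕ) (hα : 1 ≤ α) (hk : k = s + α) (hk2 : k ≤ s + t - 2) :
    let S : Finset (Fin s × Fin t) :=
      (Finset.univ ×ˢ ({⟨0, by omega⟩, ⟨t - 1, by omega⟩} : Finset (Fin t))) ∪
        (({⟨0, by omega⟩, ⟨s - 1, by omega⟩} : Finset (Fin s)) ×ˢ
          (Finset.univ.filter (fun j : Fin t => 1 ≤ (j : ℕ) ∧ (j : ℕ) ≤ α)))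
    S.card = 2 * k ∧
      IsKResolvingSet ((SimpleGraph.pathGraph s).boxProd (SimpleGraph.pathGraph t)) k S := by
  intro S
  exact main_aux s t k α ht hts hs hα hk (by omega) _ _ _ _ rfl rfl rfl rfl
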